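/- Let n ≥ 1 and 1 ≤ j, k, α, β ≤ n, and let z_{jα}(g) = g_{j,α} and w_{jα}(g) = g_{j,n+α} for g ∈ ℂ^{2n×2n}. Then on Sp(n) the conformality operator satisfies κ(z_{jα}, z_{kβ}) = −(1/2)·z_{kα} z_{jβ}, κ(w_{jα}, w_{kβ}) = −(1/2)·w_{kα} w_{jβ}, and κ(z_{jα}, w_{kβ}) = −(1/2)·z_{kα} w_{jβ}, where each identity holds pointwise at every g ∈ Sp(n). -/

import Mathlib

open Matrix

noncomputable section

/-- The matrix unit `E_{rs}` in `ℂ^{n×n}`. -/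
def matE (n : ℕ) (r s : Fin n) : Matrix (Fin n) (Fin n) ℂ :=
  Matrix.single r s 1

/-- `X_{rs} = (E_{rs} + E_{sr})/√2`. -/
def matX (n : ℕ) (r s : Fin n) : Matrix (Fin n) (Fin n) ℂ :=
  ((Real.sqrt 2 : ℂ))⁻¹ • (matE n r s + matE n s r)

/-- `Y_{rs} = (E_{rs} − E_{sr})/√2`. -/
def matY (n : ℕ) (r s : Fin n) : Matrix (Fin n) (Fin n) ℂ :=
  ((Real.sqrt 2 : ℂ))⁻¹ • (matE n r s - matE n s r)

/-- `ℂ^{2n×2n}`, with the two blocks of indices given by `Fin n ⊕ Fin n`. -/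
abbrev Mat2 (n : ℕ) := Matrix (Fin n ⊕ Fin n) (Fin n ⊕ Fin n) ℂ

/-- The quaternionic unitary group `Sp(n)`: the subgroup of `U(2n)` of matrices of the
block form `[[z, w], [−conj w, conj z]]`. -/
def SpGroup (n : ℕ) : Set (Mat2 n) :=
  {g | g ∈ Matrix.unitaryGroup (Fin n ⊕ Fin n) ℂ ∧
    ∀ i j : Fin n,
      g (Sum.inr i) (Sum.inr j) = starRingEnd ℂ (g (Sum.inl i) (Sum.inl j)) ∧
      g (Sum.inr i) (Sum.inl j) = -starRingEnd ℂ (g (Sum.inl i) (Sum.inr j))}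

/-- The basis elements `(1/√2)·diag(Y_{rs}, Y_{rs})` of `sp(n)`. -/
def spB1 (n : ℕ) (r s : Fin n) : Mat2 n :=
  ((Real.sqrt 2 : ℂ))⁻¹ • Matrix.fromBlocks (matY n r s) 0 0 (matY n r s)

/-- The basis elements `(1/√2)·diag(iX_{rs}, −iX_{rs})` of `sp(n)`. -/
def spB2 (n : ℕ) (r s : Fin n) : Mat2 n :=
  ((Real.sqrt 2 : ℂ))⁻¹ •
    Matrix.fromBlocks (Complex.I • matX n r s) 0 0 (-(Complex.I • matX n r s))

/-- The basis elements `(1/√2)·[[0, iX_{rs}], [iX_{rs}, 0]]` of `sp(n)`. -/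
def spB3 (n : ℕ) (r s : Fin n) : Mat2 n :=
  ((Real.sqrt 2 : ℂ))⁻¹ •
    Matrix.fromBlocks 0 (Complex.I • matX n r s) (Complex.I • matX n r s) 0

/-- The basis elements `(1/√2)·[[0, X_{rs}], [−X_{rs}, 0]]` of `sp(n)`. -/
def spB4 (n : ℕ) (r s : Fin n) : Mat2 n :=
  ((Real.sqrt 2 : ℂ))⁻¹ • Matrix.fromBlocks 0 (matX n r s) (-(matX n r s)) 0

/-- The basis elements `(1/√2)·diag(iD_t, −iD_t)` of `sp(n)`. -/
def spB5 (n : ℕ) (t : Fin n) : Mat2 n :=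
  ((Real.sqrt 2 : ℂ))⁻¹ •
    Matrix.fromBlocks (Complex.I • matE n t t) 0 0 (-(Complex.I • matE n t t))

/-- The basis elements `(1/√2)·[[0, iD_t], [iD_t, 0]]` of `sp(n)`. -/
def spB6 (n : ℕ) (t : Fin n) : Mat2 n :=
  ((Real.sqrt 2 : ℂ))⁻¹ •
    Matrix.fromBlocks 0 (Complex.I • matE n t t) (Complex.I • matE n t t) 0

/-- The basis elements `(1/√2)·[[0, D_t], [−D_t, 0]]` of `sp(n)`. -/
def spB7 (n : ℕ) (t : Fin n) : Mat2 n :=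
  ((Real.sqrt 2 : ℂ))⁻¹ • Matrix.fromBlocks 0 (matE n t t) (-(matE n t t)) 0

/-- `Z(f)(g) = (d/ds)|₀ f(g·exp(sZ))`. -/
def lieD1 {n : ℕ} (f : Mat2 n → ℂ) (g Z : Mat2 n) : ℂ :=
  deriv (fun s : ℝ => f (g * NormedSpace.exp ((s : ℂ) • Z))) 0

/-- `Z²(f)(g) = (d²/ds²)|₀ f(g·exp(sZ))`. -/
def lieD2 {n : ℕ} (f : Mat2 n → ℂ) (g Z : Mat2 n) : ℂ :=
  deriv (deriv (fun s : ℝ => f (g * NormedSpace.exp ((s : ℂ) • Z)))) 0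

/-- The Laplace–Beltrami operator (tension field) on `Sp(n)`:
`τ(f)(g) = Σ_{Z ∈ B} Z²(f)(g)` for the standard orthonormal basis `B` of `sp(n)`. -/
def tauSp (n : ℕ) (f : Mat2 n → ℂ) (g : Mat2 n) : ℂ :=
  (∑ r : Fin n, ∑ s : Fin n, if r < s then
      lieD2 f g (spB1 n r s) + lieD2 f g (spB2 n r s)
        + lieD2 f g (spB3 n r s) + lieD2 f g (spB4 n r s) else 0)
  + ∑ t : Fin n, (lieD2 f g (spB5 n t) + lieD2 f g (spB6 n t) + lieD2 f g (spB7 n t))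

/-- The conformality operator on `Sp(n)`:
`κ(f,h)(g) = Σ_{Z ∈ B} Z(f)(g)·Z(h)(g)`. -/
def kappaSp (n : ℕ) (f h : Mat2 n → ℂ) (g : Mat2 n) : ℂ :=
  (∑ r : Fin n, ∑ s : Fin n, if r < s then
      lieD1 f g (spB1 n r s) * lieD1 h g (spB1 n r s)
        + lieD1 f g (spB2 n r s) * lieD1 h g (spB2 n r s)
        + lieD1 f g (spB3 n r s) * lieD1 h g (spB3 n r s)
        + lieD1 f g (spB4 n r s) * lieD1 h g (spB4 n r s) else 0)
  + ∑ t : Fin n, (lieD1 f g (spB5 n t) * lieD1 h g (spB5 n t)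
      + lieD1 f g (spB6 n t) * lieD1 h g (spB6 n t)
      + lieD1 f g (spB7 n t) * lieD1 h g (spB7 n t))


-- ===== auxiliary lemmas =====

attribute [local instance] Matrix.linftyOpNormedRing Matrix.linftyOpNormedAlgebra

local notation "c2" => ((Real.sqrt 2 : ℂ))⁻¹

lemma sq2 : c2 * c2 = (2:ℂ)⁻¹ := by
  rw [← mul_inv]
  have h : ((Real.sqrt 2 : ℂ)) * ((Real.sqrt 2 : ℂ)) = 2 := by
    norm_cast; exact Real.mul_self_sqrt (by norm_num)
  rw [h]

lemma lieD1_entry {n : ℕ} (g Z : Mat2 n) (i l : Fin n ⊕ Fin n) :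
    lieD1 (fun w => w i l) g Z = (g * Z) i l := by
  have h1 : HasDerivAt (fun c : ℂ => NormedSpace.exp (c • Z))
      (NormedSpace.exp ((((0:ℝ)):ℂ) • Z) * Z) (((0:ℝ)):ℂ) := hasDerivAt_exp_smul_const Z _
  have h2 : HasDerivAt (fun s : ℝ => NormedSpace.exp ((s:ℂ) • Z)) Z 0 := by
    have h3 := HasDerivAt.scomp (h := fun s : ℝ => (s:ℂ)) (0:ℝ) h1 Complex.ofRealCLM.hasDerivAt
    simp only [Function.comp_def, Complex.ofRealCLM_apply, Complex.ofReal_zero, zero_smul,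
      NormedSpace.exp_zero, one_mul, Complex.ofReal_one, one_smul] at h3
    exact h3
  let L : Mat2 n →L[ℝ] ℂ := LinearMap.toContinuousLinearMap
    { toFun := fun M => (g * M) i l
      map_add' := by intro A B; simp [Matrix.mul_add]
      map_smul' := by intro c A; simp [Matrix.mul_smul] }
  have h4 : HasDerivAt (fun s : ℝ => (g * NormedSpace.exp ((s:ℂ) • Z)) i l) ((g * Z) i l) 0 :=
    L.hasFDerivAt.comp_hasDerivAt 0 h2
  exact h4.deriv

lemma mul_fromBlocks_apply_l {n : ℕ} (g : Mat2 n) (P Q R S : Matrix (Fin n) (Fin n) ℂ)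
    (i : Fin n ⊕ Fin n) (α : Fin n) :
    (g * Matrix.fromBlocks P Q R S) i (Sum.inl α)
      = (∑ p, g i (Sum.inl p) * P p α) + ∑ p, g i (Sum.inr p) * R p α := by
  rw [Matrix.mul_apply, Fintype.sum_sum_type]; rfl

lemma mul_fromBlocks_apply_r {n : ℕ} (g : Mat2 n) (P Q R S : Matrix (Fin n) (Fin n) ℂ)
    (i : Fin n ⊕ Fin n) (α : Fin n) :
    (g * Matrix.fromBlocks P Q R S) i (Sum.inr α)
      = (∑ p, g i (Sum.inl p) * Q p α) + ∑ p, g i (Sum.inr p) * S p α := by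
  rw [Matrix.mul_apply, Fintype.sum_sum_type]; rfl

lemma sum_matE {n : ℕ} (f : Fin n → ℂ) (r s α : Fin n) :
    ∑ p, f p * matE n r s p α = if s = α then f r else 0 := by
  simp [matE, Matrix.single, ite_and, Finset.sum_ite_eq]

lemma sum_smulM {n : ℕ} (f : Fin n → ℂ) (c : ℂ) (M : Matrix (Fin n) (Fin n) ℂ) (α : Fin n) :
    ∑ p, f p * (c • M) p α = c * ∑ p, f p * M p α := by
  rw [Finset.mul_sum]
  refine Finset.sum_congr rfl fun p _ => ?_
  simp [Matrix.smul_apply, smul_eq_mul]; ring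

lemma sum_negM {n : ℕ} (f : Fin n → ℂ) (M : Matrix (Fin n) (Fin n) ℂ) (α : Fin n) :
    ∑ p, f p * (-M) p α = -∑ p, f p * M p α := by
  simp [Matrix.neg_apply, mul_neg]

lemma sum_zeroM {n : ℕ} (f : Fin n → ℂ) (α : Fin n) :
    ∑ p, f p * (0 : Matrix (Fin n) (Fin n) ℂ) p α = 0 := by simp

lemma sum_matX {n : ℕ} (f : Fin n → ℂ) (r s α : Fin n) :
    ∑ p, f p * matX n r s p α
      = c2 * ((if s = α then f r else 0) + (if r = α then f s else 0)) := by
  rw [matX, sum_smulM]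
  have h : ∀ p, f p * (matE n r s + matE n s r) p α
      = f p * matE n r s p α + f p * matE n s r p α := fun p => by
    simp [Matrix.add_apply, mul_add]
  rw [Finset.sum_congr rfl fun p _ => h p, Finset.sum_add_distrib, sum_matE, sum_matE]

lemma sum_matY {n : ℕ} (f : Fin n → ℂ) (r s α : Fin n) :
    ∑ p, f p * matY n r s p α
      = c2 * ((if s = α then f r else 0) - (if r = α then f s else 0)) := by
  rw [matY, sum_smulM]
  have h : ∀ p, f p * (matE n r s - matE n s r) p α
      = f p * matE n r s p α - f p * matE n s r p α := fun p => by
    simp [Matrix.sub_apply, mul_sub]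
  rw [Finset.sum_congr rfl fun p _ => h p, Finset.sum_sub_distrib, sum_matE, sum_matE]

section entries
variable {n : ℕ} (g : Mat2 n) (i : Fin n ⊕ Fin n) (r s t α : Fin n)

lemma gB1l : (g * spB1 n r s) i (Sum.inl α)
    = (2:ℂ)⁻¹ * ((if s = α then g i (Sum.inl r) else 0)
        - (if r = α then g i (Sum.inl s) else 0)) := by
  rw [spB1, Matrix.mul_smul, Matrix.smul_apply, mul_fromBlocks_apply_l, sum_zeroM, sum_matY]
  rw [smul_eq_mul, add_zero, ← mul_assoc, sq2]

lemma gB1r : (g * spB1 n r s) i (Sum.inr α)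
    = (2:ℂ)⁻¹ * ((if s = α then g i (Sum.inr r) else 0)
        - (if r = α then g i (Sum.inr s) else 0)) := by
  rw [spB1, Matrix.mul_smul, Matrix.smul_apply, mul_fromBlocks_apply_r, sum_zeroM, sum_matY]
  rw [smul_eq_mul, zero_add, ← mul_assoc, sq2]

lemma gB2l : (g * spB2 n r s) i (Sum.inl α)
    = Complex.I * ((2:ℂ)⁻¹ * ((if s = α then g i (Sum.inl r) else 0)
        + (if r = α then g i (Sum.inl s) else 0))) := by
  rw [spB2, Matrix.mul_smul, Matrix.smul_apply, mul_fromBlocks_apply_l, sum_zeroM,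
    sum_smulM, sum_matX, smul_eq_mul, add_zero, ← sq2]; ring

lemma gB2r : (g * spB2 n r s) i (Sum.inr α)
    = -(Complex.I * ((2:ℂ)⁻¹ * ((if s = α then g i (Sum.inr r) else 0)
        + (if r = α then g i (Sum.inr s) else 0)))) := by
  rw [spB2, Matrix.mul_smul, Matrix.smul_apply, mul_fromBlocks_apply_r, sum_zeroM,
    sum_negM, sum_smulM, sum_matX, smul_eq_mul, zero_add, ← sq2]; ring

lemma gB3l : (g * spB3 n r s) i (Sum.inl α)
    = Complex.I * ((2:ℂ)⁻¹ * ((if s = α then g i (Sum.inr r) else 0)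
        + (if r = α then g i (Sum.inr s) else 0))) := by
  rw [spB3, Matrix.mul_smul, Matrix.smul_apply, mul_fromBlocks_apply_l, sum_zeroM,
    sum_smulM, sum_matX, smul_eq_mul, zero_add, ← sq2]; ring

lemma gB3r : (g * spB3 n r s) i (Sum.inr α)
    = Complex.I * ((2:ℂ)⁻¹ * ((if s = α then g i (Sum.inl r) else 0)
        + (if r = α then g i (Sum.inl s) else 0))) := by
  rw [spB3, Matrix.mul_smul, Matrix.smul_apply, mul_fromBlocks_apply_r, sum_zeroM,
    sum_smulM, sum_matX, smul_eq_mul, add_zero, ← sq2]; ring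

lemma gB4l : (g * spB4 n r s) i (Sum.inl α)
    = -((2:ℂ)⁻¹ * ((if s = α then g i (Sum.inr r) else 0)
        + (if r = α then g i (Sum.inr s) else 0))) := by
  rw [spB4, Matrix.mul_smul, Matrix.smul_apply, mul_fromBlocks_apply_l, sum_zeroM,
    sum_negM, sum_matX, smul_eq_mul, zero_add, ← sq2]; ring

lemma gB4r : (g * spB4 n r s) i (Sum.inr α)
    = (2:ℂ)⁻¹ * ((if s = α then g i (Sum.inl r) else 0)
        + (if r = α then g i (Sum.inl s) else 0)) := by
  rw [spB4, Matrix.mul_smul, Matrix.smul_apply, mul_fromBlocks_apply_r, sum_zeroM,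
    sum_matX, smul_eq_mul, add_zero, ← sq2]; ring

lemma gB5l : (g * spB5 n t) i (Sum.inl α)
    = Complex.I * (c2 * (if t = α then g i (Sum.inl t) else 0)) := by
  rw [spB5, Matrix.mul_smul, Matrix.smul_apply, mul_fromBlocks_apply_l, sum_zeroM,
    sum_smulM, sum_matE, smul_eq_mul, add_zero]; ring

lemma gB5r : (g * spB5 n t) i (Sum.inr α)
    = -(Complex.I * (c2 * (if t = α then g i (Sum.inr t) else 0))) := by
  rw [spB5, Matrix.mul_smul, Matrix.smul_apply, mul_fromBlocks_apply_r, sum_zeroM,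
    sum_negM, sum_smulM, sum_matE, smul_eq_mul, zero_add]; ring

lemma gB6l : (g * spB6 n t) i (Sum.inl α)
    = Complex.I * (c2 * (if t = α then g i (Sum.inr t) else 0)) := by
  rw [spB6, Matrix.mul_smul, Matrix.smul_apply, mul_fromBlocks_apply_l, sum_zeroM,
    sum_smulM, sum_matE, smul_eq_mul, zero_add]; ring

lemma gB6r : (g * spB6 n t) i (Sum.inr α)
    = Complex.I * (c2 * (if t = α then g i (Sum.inl t) else 0)) := by
  rw [spB6, Matrix.mul_smul, Matrix.smul_apply, mul_fromBlocks_apply_r, sum_zeroM,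
    sum_smulM, sum_matE, smul_eq_mul, add_zero]; ring

lemma gB7l : (g * spB7 n t) i (Sum.inl α)
    = -(c2 * (if t = α then g i (Sum.inr t) else 0)) := by
  rw [spB7, Matrix.mul_smul, Matrix.smul_apply, mul_fromBlocks_apply_l, sum_zeroM,
    sum_negM, sum_matE, smul_eq_mul, zero_add]; ring

lemma gB7r : (g * spB7 n t) i (Sum.inr α)
    = c2 * (if t = α then g i (Sum.inl t) else 0) := by
  rw [spB7, Matrix.mul_smul, Matrix.smul_apply, mul_fromBlocks_apply_r, sum_zeroM,
    sum_matE, smul_eq_mul, add_zero]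

end entries

lemma prodII (x y : ℂ) :
    Complex.I * (c2 * x) * (Complex.I * (c2 * y)) = -((2:ℂ)⁻¹ * (x * y)) := by
  calc Complex.I * (c2 * x) * (Complex.I * (c2 * y))
      = Complex.I * Complex.I * (c2 * c2 * (x * y)) := by ring
    _ = _ := by rw [Complex.I_mul_I, sq2]; ring

lemma prodImI (x y : ℂ) :
    Complex.I * (c2 * x) * -(Complex.I * (c2 * y)) = (2:ℂ)⁻¹ * (x * y) := by
  calc Complex.I * (c2 * x) * -(Complex.I * (c2 * y))
      = -(Complex.I * Complex.I * (c2 * c2 * (x * y))) := by ring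
    _ = _ := by rw [Complex.I_mul_I, sq2]; ring

lemma prodmImI (x y : ℂ) :
    -(Complex.I * (c2 * x)) * -(Complex.I * (c2 * y)) = -((2:ℂ)⁻¹ * (x * y)) := by
  calc -(Complex.I * (c2 * x)) * -(Complex.I * (c2 * y))
      = Complex.I * Complex.I * (c2 * c2 * (x * y)) := by ring
    _ = _ := by rw [Complex.I_mul_I, sq2]; ring

lemma prodcc (x y : ℂ) : c2 * x * (c2 * y) = (2:ℂ)⁻¹ * (x * y) := by
  rw [← sq2]; ring

lemma prodmcc (x y : ℂ) : -(c2 * x) * (c2 * y) = -((2:ℂ)⁻¹ * (x * y)) := by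
  rw [← sq2]; ring

lemma prodmcmc (x y : ℂ) : -(c2 * x) * -(c2 * y) = (2:ℂ)⁻¹ * (x * y) := by
  rw [← sq2]; ring

lemma prodI2 (x y : ℂ) : Complex.I * x * (Complex.I * y) = -(x * y) := by
  have h : Complex.I * x * (Complex.I * y) = Complex.I * Complex.I * (x * y) := by ring
  rw [h, Complex.I_mul_I]; ring

lemma sum_lt_eq {n : ℕ} (T : Fin n → Fin n → ℂ) (hsymm : ∀ r s, T r s = T s r) :
    ∑ r, ∑ s, (if r < s then T r s else 0)
      = (2:ℂ)⁻¹ * ((∑ r, ∑ s, T r s) - ∑ t, T t t) := by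
  have h1 : ∑ r : Fin n, ∑ s : Fin n, (if s < r then T r s else 0)
      = ∑ r : Fin n, ∑ s : Fin n, (if r < s then T r s else 0) := by
    rw [Finset.sum_comm]
    exact Finset.sum_congr rfl fun r _ => Finset.sum_congr rfl fun s _ => by rw [hsymm]
  have h3 : ∑ r : Fin n, ∑ s : Fin n, (if r = s then T r s else 0) = ∑ t, T t t := by
    simp [Finset.sum_ite_eq]
  have h4 : ∑ r : Fin n, ∑ s : Fin n, T r s
      = (∑ r : Fin n, ∑ s : Fin n, (if r < s then T r s else 0))
        + (∑ r : Fin n, ∑ s : Fin n, (if s < r then T r s else 0))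
        + ∑ t, T t t := by
    rw [← h3, ← Finset.sum_add_distrib, ← Finset.sum_add_distrib]
    refine Finset.sum_congr rfl fun r _ => ?_
    rw [← Finset.sum_add_distrib, ← Finset.sum_add_distrib]
    refine Finset.sum_congr rfl fun s _ => ?_
    rcases lt_trichotomy r s with h | h | h
    · simp [h, h.ne, not_lt_of_gt h]
    · simp [h, lt_irrefl]
    · simp [h, h.ne', not_lt_of_gt h, lt_irrefl]
  rw [h4, h1]; ring

lemma symp {n : ℕ} (g : Mat2 n) (hg : g ∈ SpGroup n) (j k : Fin n) :
    ∑ p, g (Sum.inl j) (Sum.inl p) * g (Sum.inl k) (Sum.inr p)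
      = ∑ p, g (Sum.inl j) (Sum.inr p) * g (Sum.inl k) (Sum.inl p) := by
  have hu : g * star g = 1 := Matrix.mem_unitaryGroup_iff.mp hg.1
  have h0 : (g * star g) (Sum.inl j) (Sum.inr k) = 0 := by
    rw [hu]; exact Matrix.one_apply_ne (by simp)
  rw [Matrix.mul_apply, Fintype.sum_sum_type] at h0
  have e1 : ∀ p, (star g) (Sum.inl p) (Sum.inr k)
      = -(g (Sum.inl k) (Sum.inr p)) := fun p => by
    rw [Matrix.star_apply, (hg.2 k p).2]; simp
  have e2 : ∀ p, (star g) (Sum.inr p) (Sum.inr k) = g (Sum.inl k) (Sum.inl p) := fun p => by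
    rw [Matrix.star_apply, (hg.2 k p).1]; simp
  simp only [e1, e2, mul_neg] at h0
  rw [Finset.sum_neg_distrib] at h0
  linear_combination -h0


/-- on `Sp(n)` the conformality operator satisfies
`κ(z_{jα}, z_{kβ}) = −(1/2)·z_{kα}z_{jβ}`, `κ(w_{jα}, w_{kβ}) = −(1/2)·w_{kα}w_{jβ}`
and `κ(z_{jα}, w_{kβ}) = −(1/2)·z_{kα}w_{jβ}`, where `z_{jα}(g) = g_{j,α}` and
`w_{jα}(g) = g_{j,n+α}`. -/
theorem kappa_coeff_Sp (n : ℕ) (hn : 1 ≤ n) (j k α β : Fin n)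
    (g : Mat2 n) (hg : g ∈ SpGroup n) :
    kappaSp n (fun w => w (Sum.inl j) (Sum.inl α)) (fun w => w (Sum.inl k) (Sum.inl β)) g
        = -(1 / 2) * (g (Sum.inl k) (Sum.inl α) * g (Sum.inl j) (Sum.inl β))
      ∧ kappaSp n (fun w => w (Sum.inl j) (Sum.inr α)) (fun w => w (Sum.inl k) (Sum.inr β)) g
        = -(1 / 2) * (g (Sum.inl k) (Sum.inr α) * g (Sum.inl j) (Sum.inr β))
      ∧ kappaSp n (fun w => w (Sum.inl j) (Sum.inl α)) (fun w => w (Sum.inl k) (Sum.inr β)) g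
        = -(1 / 2) * (g (Sum.inl k) (Sum.inl α) * g (Sum.inl j) (Sum.inr β)) := by
  refine ⟨?_, ?_, ?_⟩
  · rw [kappaSp]
    simp only [lieD1_entry, gB1l, gB2l, gB3l, gB4l, gB5l, gB6l, gB7l, prodII, prodmcmc]
    rw [sum_lt_eq]; swap
    · intro r s; ring
    simp only [mul_sub, sub_mul, mul_add, add_mul, mul_neg, neg_mul, neg_neg, mul_ite, ite_mul,
      mul_zero, zero_mul, Finset.sum_add_distrib, Finset.sum_sub_distrib, Finset.sum_neg_distrib,
      Finset.sum_ite_eq, Finset.sum_ite_eq', Finset.mem_univ, if_true, Finset.sum_ite_irrel,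
      Finset.sum_const_zero, prodI2]
    by_cases hab : β = α
    · simp only [hab, if_true, if_pos]
      ring
    · simp only [hab, if_false, if_neg hab]
      ring
  · rw [kappaSp]
    simp only [lieD1_entry, gB1r, gB2r, gB3r, gB4r, gB5r, gB6r, gB7r, prodmImI, prodII, prodcc]
    rw [sum_lt_eq]; swap
    · intro r s; ring
    simp only [mul_sub, sub_mul, mul_add, add_mul, mul_neg, neg_mul, neg_neg, mul_ite, ite_mul,
      mul_zero, zero_mul, Finset.sum_add_distrib, Finset.sum_sub_distrib, Finset.sum_neg_distrib,
      Finset.sum_ite_eq, Finset.sum_ite_eq', Finset.mem_univ, if_true, Finset.sum_ite_irrel,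
      Finset.sum_const_zero, prodI2]
    by_cases hab : β = α
    · simp only [hab, if_true, if_pos]
      ring
    · simp only [hab, if_false, if_neg hab]
      ring
  · rw [kappaSp]
    simp only [lieD1_entry, gB1l, gB2l, gB3l, gB4l, gB5l, gB6l, gB7l,
      gB1r, gB2r, gB3r, gB4r, gB5r, gB6r, gB7r, prodImI, prodII, prodmcc]
    rw [sum_lt_eq]; swap
    · intro r s; ring
    simp only [mul_sub, sub_mul, mul_add, add_mul, mul_neg, neg_mul, neg_neg, mul_ite, ite_mul,
      mul_zero, zero_mul, Finset.sum_add_distrib, Finset.sum_sub_distrib, Finset.sum_neg_distrib,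
      Finset.sum_ite_eq, Finset.sum_ite_eq', Finset.mem_univ, if_true, Finset.sum_ite_irrel,
      Finset.sum_const_zero, prodI2]
    by_cases hab : β = α
    · simp only [hab, if_true, if_pos]
      have hs1 : ∑ x : Fin n, 2⁻¹ * g (Sum.inl j) (Sum.inl x) * (2⁻¹ * g (Sum.inl k) (Sum.inr x))
          = (4:ℂ)⁻¹ * ∑ p, g (Sum.inl j) (Sum.inl p) * g (Sum.inl k) (Sum.inr p) := by
        rw [Finset.mul_sum]; exact Finset.sum_congr rfl fun p _ => by ring
      have hs2 : ∑ x : Fin n, 2⁻¹ * g (Sum.inl j) (Sum.inr x) * (2⁻¹ * g (Sum.inl k) (Sum.inl x))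
          = (4:ℂ)⁻¹ * ∑ p, g (Sum.inl j) (Sum.inr p) * g (Sum.inl k) (Sum.inl p) := by
        rw [Finset.mul_sum]; exact Finset.sum_congr rfl fun p _ => by ring
      rw [hs1, hs2]
      linear_combination ((2:ℂ)⁻¹ * (4:ℂ)⁻¹ * 4) * symp g hg j k
    · simp only [hab, if_false, if_neg hab]
      ring

end
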